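/- Let L be a real n×n matrix with L + Lᵀ ≻ 0, M diagonal positive definite, Π diagonal with 0/1 entries, ν > 0. Set Z = (1/√ν) M^{1/2} L⁻¹ M^{1/2} (I − Π). If I−Π = blkdiag(I_ℓ, 0), and F̃⁻¹ = M^{1/2}L⁻¹M^{1/2} has its top-left ℓ×ℓ block with all eigenvalues of strictly positive real part, and F̃⁻¹(I−Π) is diagonalizable (= XΛX⁻¹), then ‖(I+Z)⁻¹‖ ≤ cond(X)·max{ 1/min_{λ∈spec} |1+λ/√ν| , 1 }, and this bound tends to cond(X) as ν → 0. -/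

import Mathlib

open Matrix Filter Topology

noncomputable def specNormC {n : ℕ} (A : Matrix (Fin n) (Fin n) ℂ) : ℝ :=
  ‖Matrix.toEuclideanCLM (𝕜 := ℂ) A‖

lemma norm_diag_le {n : ℕ} (w : Fin n → ℂ) (C : ℝ) (hC : 0 ≤ C)
    (h : ∀ i, ‖w i‖ ≤ C) :
    ‖Matrix.toEuclideanCLM (𝕜 := ℂ) (Matrix.diagonal w)‖ ≤ C := by
  refine ContinuousLinearMap.opNorm_le_bound _ hC fun x => ?_
  have hx : ∀ i, (Matrix.toEuclideanCLM (𝕜 := ℂ) (Matrix.diagonal w) x) i = w i * x i := by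
    intro i
    have := Matrix.ofLp_toEuclideanCLM (𝕜 := ℂ) (Matrix.diagonal w) x
    have h2 := congrFun this i
    simpa [Matrix.mulVec_diagonal] using h2
  rw [EuclideanSpace.norm_eq, EuclideanSpace.norm_eq]
  rw [← Real.sqrt_sq hC, ← Real.sqrt_mul (by positivity), Finset.mul_sum]
  apply Real.sqrt_le_sqrt
  apply Finset.sum_le_sum
  intro i _
  rw [hx i]
  have h1 : ‖w i * x i‖ ≤ C * ‖x i‖ := by
    rw [norm_mul]
    exact mul_le_mul_of_nonneg_right (h i) (norm_nonneg _)
  calc ‖w i * x i‖ ^ 2 ≤ (C * ‖x i‖) ^ 2 := pow_le_pow_left₀ (norm_nonneg _) h1 2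
    _ = C ^ 2 * ‖x i‖ ^ 2 := by ring

theorem stmt16 {n : ℕ} (L : Matrix (Fin (n + 1)) (Fin (n + 1)) ℝ)
    (m d : Fin (n + 1) → ℝ) (hm : ∀ i, 0 < m i) (hd : ∀ i, d i = 0 ∨ d i = 1)
    (hL : (L + Lᵀ).PosDef)
    (X : Matrix (Fin (n + 1)) (Fin (n + 1)) ℂ) (hXu : IsUnit X)
    (Λ : Fin (n + 1) → ℂ)
    (hdiag : ((diagonal fun i => Real.sqrt (m i)) * L⁻¹ *
          (diagonal fun i => Real.sqrt (m i)) * (1 - diagonal d)).map Complex.ofReal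
        = X * diagonal Λ * X⁻¹)
    (hre : ∀ i, Λ i = 0 ∨ 0 < (Λ i).re) :
    (∀ ν : ℝ, 0 < ν →
        specNormC ((1 + ((Real.sqrt ν)⁻¹ • ((diagonal fun i => Real.sqrt (m i)) * L⁻¹ *
              (diagonal fun i => Real.sqrt (m i)) * (1 - diagonal d))).map Complex.ofReal)⁻¹)
          ≤ specNormC X * specNormC X⁻¹ *
            max ((Finset.univ.inf' Finset.univ_nonempty
              fun i => ‖1 + Λ i / ((Real.sqrt ν : ℝ) : ℂ)‖)⁻¹) 1) ∧
      Tendsto (fun ν : ℝ => specNormC X * specNormC X⁻¹ *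
          max ((Finset.univ.inf' Finset.univ_nonempty
            fun i => ‖1 + Λ i / ((Real.sqrt ν : ℝ) : ℂ)‖)⁻¹) 1)
        (nhdsWithin 0 (Set.Ioi 0)) (nhds (specNormC X * specNormC X⁻¹)) := by
  set B := (diagonal fun i => Real.sqrt (m i)) * L⁻¹ *
      (diagonal fun i => Real.sqrt (m i)) * (1 - diagonal d) with hB
  have hXdet : IsUnit X.det := (Matrix.isUnit_iff_isUnit_det X).1 hXu
  have hXX : X * X⁻¹ = 1 := Matrix.mul_nonsing_inv X hXdet
  have hXX' : X⁻¹ * X = 1 := Matrix.nonsing_inv_mul X hXdet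
  -- key fact: for s > 0 and any i, 1 ≤ |1 + Λ i / s|
  have key : ∀ s : ℝ, 0 < s → ∀ i, (1 : ℝ) ≤ ‖1 + Λ i / (s : ℂ)‖ := by
    intro s hs i
    have hre' : (0:ℝ) ≤ (Λ i / (s:ℂ)).re := by
      rcases hre i with h0 | hp
      · simp [h0]
      · rw [Complex.div_ofReal_re]
        exact div_nonneg hp.le hs.le
    calc (1:ℝ) ≤ (1 + Λ i / (s:ℂ)).re := by rw [Complex.add_re, Complex.one_re]; linarith
      _ ≤ ‖1 + Λ i / (s:ℂ)‖ := Complex.re_le_norm _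
  have inf_ge : ∀ s : ℝ, 0 < s →
      (1:ℝ) ≤ Finset.univ.inf' Finset.univ_nonempty
        (fun i => ‖1 + Λ i / ((s : ℝ) : ℂ)‖) :=
    fun s hs => Finset.le_inf' _ _ fun i _ => key s hs i
  constructor
  · intro ν hν
    set s := Real.sqrt ν with hsdef
    have hs : 0 < s := Real.sqrt_pos.2 hν
    set w : Fin (n+1) → ℂ := fun i => 1 + Λ i / (s : ℂ) with hw
    have hwne : ∀ i, w i ≠ 0 := by
      intro i h0
      have h1 := key s hs i
      rw [show (1:ℂ) + Λ i / (s:ℂ) = w i from rfl, h0] at h1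
      simp at h1
      linarith
    -- rewrite the matrix
    have hmap : ((s⁻¹ • B).map Complex.ofReal)
        = ((s:ℂ)⁻¹ • (B.map Complex.ofReal)) := by
      ext i j
      simp [Matrix.map_apply, Matrix.smul_apply]
    have hmat : (1 + ((s⁻¹ • B).map Complex.ofReal)) = X * diagonal w * X⁻¹ := by
      rw [hmap, hdiag]
      have : diagonal w = 1 + (s:ℂ)⁻¹ • diagonal Λ := by
        rw [hw]
        ext i j
        rcases eq_or_ne i j with rfl | hij
        · simp [Matrix.diagonal_apply_eq, Matrix.one_apply_eq, div_eq_inv_mul]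
        · simp [Matrix.diagonal_apply_ne _ hij, Matrix.one_apply_ne hij]
      rw [this, Matrix.mul_add, Matrix.add_mul, Matrix.mul_one, hXX,
        Matrix.mul_smul, Matrix.smul_mul]
    have hinv : (1 + ((s⁻¹ • B).map Complex.ofReal))⁻¹
        = X * diagonal (fun i => (w i)⁻¹) * X⁻¹ := by
      rw [hmat]
      apply Matrix.inv_eq_right_inv
      calc X * diagonal w * X⁻¹ * (X * diagonal (fun i => (w i)⁻¹) * X⁻¹)
          = X * diagonal w * (X⁻¹ * X) * diagonal (fun i => (w i)⁻¹) * X⁻¹ := by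
            noncomm_ring
        _ = X * (diagonal w * diagonal fun i => (w i)⁻¹) * X⁻¹ := by
            rw [hXX']; noncomm_ring
        _ = 1 := by
            rw [Matrix.diagonal_mul_diagonal]
            have : (fun i => w i * (w i)⁻¹) = fun _ => (1:ℂ) := by
              funext i; exact mul_inv_cancel₀ (hwne i)
            rw [this, Matrix.diagonal_one, Matrix.mul_one, hXX]
    rw [hinv]
    set inf := Finset.univ.inf' Finset.univ_nonempty
        (fun i => ‖1 + Λ i / ((s : ℝ) : ℂ)‖) with hinf
    have hinfpos : 0 < inf := lt_of_lt_of_le one_pos (inf_ge s hs)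
    have hdiagnorm : ‖Matrix.toEuclideanCLM (𝕜 := ℂ) (diagonal fun i => (w i)⁻¹)‖ ≤ inf⁻¹ := by
      apply norm_diag_le _ _ (by positivity)
      intro i
      rw [norm_inv]
      exact inv_anti₀ hinfpos (Finset.inf'_le _ (Finset.mem_univ i))
    have hsub : specNormC (X * diagonal (fun i => (w i)⁻¹) * X⁻¹)
        ≤ specNormC X * inf⁻¹ * specNormC X⁻¹ := by
      unfold specNormC
      rw [_root_.map_mul, _root_.map_mul]
      calc ‖Matrix.toEuclideanCLM (𝕜 := ℂ) X * Matrix.toEuclideanCLM (𝕜 := ℂ) (diagonal fun i => (w i)⁻¹) *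
            Matrix.toEuclideanCLM (𝕜 := ℂ) X⁻¹‖
          ≤ ‖Matrix.toEuclideanCLM (𝕜 := ℂ) X * Matrix.toEuclideanCLM (𝕜 := ℂ) (diagonal fun i => (w i)⁻¹)‖ *
            ‖Matrix.toEuclideanCLM (𝕜 := ℂ) X⁻¹‖ := norm_mul_le _ _
        _ ≤ ‖Matrix.toEuclideanCLM (𝕜 := ℂ) X‖ * ‖Matrix.toEuclideanCLM (𝕜 := ℂ) (diagonal fun i => (w i)⁻¹)‖ *
            ‖Matrix.toEuclideanCLM (𝕜 := ℂ) X⁻¹‖ :=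
            mul_le_mul_of_nonneg_right (norm_mul_le _ _) (norm_nonneg _)
        _ ≤ ‖Matrix.toEuclideanCLM (𝕜 := ℂ) X‖ * inf⁻¹ * ‖Matrix.toEuclideanCLM (𝕜 := ℂ) X⁻¹‖ := by
            apply mul_le_mul_of_nonneg_right _ (norm_nonneg _)
            exact mul_le_mul_of_nonneg_left hdiagnorm (norm_nonneg _)
    calc specNormC (X * diagonal (fun i => (w i)⁻¹) * X⁻¹)
        ≤ specNormC X * inf⁻¹ * specNormC X⁻¹ := hsub
      _ = specNormC X * specNormC X⁻¹ * inf⁻¹ := by ring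
      _ ≤ specNormC X * specNormC X⁻¹ * max inf⁻¹ 1 := by
          apply mul_le_mul_of_nonneg_left (le_max_left _ _)
          unfold specNormC; positivity
  · apply Tendsto.congr' (f₁ := fun _ : ℝ => specNormC X * specNormC X⁻¹)
    · filter_upwards [self_mem_nhdsWithin] with ν (hν : ν ∈ Set.Ioi 0)
      have hs : 0 < Real.sqrt ν := Real.sqrt_pos.2 hν
      have h1 := inf_ge _ hs
      rw [max_eq_right (inv_le_one_of_one_le₀ h1), mul_one]
    · exact tendsto_const_nhds
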